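/- For natural number n and complex a, b, c, d with c not of the form 0,−1,…, and with c − n, d, 1+a−c not nonpositive integers: the terminating series satisfies ₃F₂(−n, a, b; c−n, d; 1) = ((1+a−c)_n / (1−c)_n) · ₃F₂(−n, a, d−b; 1+a−c; d; 1), i.e. ∑_{k=0}^{n} (−n)_k (a)_k (b)_k / ((c−n)_k (d)_k k!) = ((1+a−c)_n / (1−c)_n) · ∑_{k=0}^{n} (−n)_k (a)_k (d−b)_k / ((1+a−c)_k (d)_k k!). -/

import Mathlib

set_option maxHeartbeats 1000000


open Complex Finset

/-- Pochhammer symbol `(x)_k = x (x+1) ⋯ (x+k-1)`. -/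
noncomputable def poch (x : ℂ) (k : ℕ) : ℂ := ∏ i ∈ Finset.range k, (x + i)

/-- Beta function `B(x,y) = Γ(x) Γ(y) / Γ(x+y)`. -/
noncomputable def cBeta (x y : ℂ) : ℂ :=
  Complex.Gamma x * Complex.Gamma y / Complex.Gamma (x + y)

lemma poch_succ (x : ℂ) (k : ℕ) : poch x (k+1) = poch x k * (x + k) :=
  Finset.prod_range_succ _ _

lemma poch_add (x : ℂ) (j m : ℕ) : poch x (j + m) = poch x j * poch (x + j) m := by
  unfold poch
  rw [Finset.prod_range_add]
  congr 1
  refine Finset.prod_congr rfl fun i _ => ?_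
  push_cast; ring

lemma poch_ne_zero {x : ℂ} {k : ℕ} (h : ∀ i : ℕ, i < k → x + i ≠ 0) : poch x k ≠ 0 :=
  Finset.prod_ne_zero_iff.mpr fun i hi => h i (Finset.mem_range.mp hi)

lemma poch_reflect (x : ℂ) (k : ℕ) : poch x k = (-1)^k * poch (1 - x - k) k := by
  unfold poch
  rw [← Finset.prod_range_reflect]
  have : ∀ j ∈ Finset.range k, (x + ((k - 1 - j : ℕ) : ℂ)) = -1 * (1 - x - k + j) := by
    intro j hj
    have hj' : j < k := Finset.mem_range.mp hj
    have : ((k - 1 - j : ℕ) : ℂ) = (k : ℂ) - 1 - j := by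
      have : (k - 1 - j : ℕ) = k - (1 + j) := by omega
      rw [this]
      push_cast [Nat.cast_sub (by omega : 1 + j ≤ k)]
      ring
    rw [this]; ring
  rw [Finset.prod_congr rfl this, Finset.prod_mul_distrib, Finset.prod_const,
    Finset.card_range]

lemma vdm (x y : ℂ) (k : ℕ) :
    poch (x+y) k = ∑ j ∈ Finset.range (k+1), (k.choose j : ℂ) * (poch x j * poch y (k-j)) := by
  induction k with
  | zero => simp [poch]
  | succ k ih =>
    rw [Finset.sum_choose_succ_mul (fun i j => poch x i * poch y j) k, poch_succ, ih,
      Finset.sum_mul, ← Finset.sum_add_distrib]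
    refine Finset.sum_congr rfl fun j hj => ?_
    have hj' : j ≤ k := Nat.lt_succ_iff.mp (Finset.mem_range.mp hj)
    have h1 : k + 1 - j = (k - j) + 1 := by omega
    have h2 : (x + y + k) = (x + j) + (y + (k - j : ℕ)) := by
      have : ((k - j : ℕ) : ℂ) = (k : ℂ) - j := by push_cast [Nat.cast_sub hj']; ring
      rw [this]; ring
    rw [h1, poch_succ, poch_succ, h2]
    ring

lemma poch_nat_succ (m j : ℕ) : poch ((m:ℂ)+1) j * (m.factorial : ℂ) = ((m+j).factorial : ℂ) := by
  induction j with
  | zero => simp [poch]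
  | succ j ih =>
    rw [poch_succ, mul_comm (poch _ j) _, mul_assoc, ih]
    have : m + (j+1) = (m + j) + 1 := by omega
    rw [this, Nat.factorial_succ]
    push_cast; ring

lemma poch_neg_nat (k j : ℕ) (hj : j ≤ k) :
    poch (-(k:ℂ)) j = (-1)^j * (k.factorial : ℂ) / ((k-j).factorial : ℂ) := by
  have h1 : (1 : ℂ) - (-(k:ℂ)) - j = ((k - j : ℕ) : ℂ) + 1 := by
    push_cast [Nat.cast_sub hj]; ring
  rw [poch_reflect (-(k:ℂ)) j, h1]
  have h2 := poch_nat_succ (k - j) j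
  rw [Nat.sub_add_cancel hj] at h2
  field_simp [Nat.cast_ne_zero.mpr (Nat.factorial_ne_zero (k-j))] at h2 ⊢
  exact h2

lemma poch_neg_self_gt {k j : ℕ} (h : k < j) : poch (-(k:ℂ)) j = 0 :=
  Finset.prod_eq_zero (Finset.mem_range.mpr h) (by simp)

lemma chuv (b d : ℂ) (k : ℕ) (hd : ∀ i : ℕ, d + i ≠ 0) :
    ∑ j ∈ Finset.range (k+1), poch (-(k:ℂ)) j * poch b j / (poch d j * (j.factorial : ℂ)) =
      poch (d - b) k / poch d k := by
  have hrd : poch (d - b) k = (-1)^k * poch (b + (1 - d - k)) k := by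
    rw [poch_reflect (d-b) k]; ring_nf
  rw [hrd, vdm b (1-d-k) k, Finset.mul_sum, Finset.sum_div]
  refine Finset.sum_congr rfl fun j hj => ?_
  have hj' : j ≤ k := Nat.lt_succ_iff.mp (Finset.mem_range.mp hj)
  have hCk : poch d k = poch d j * poch (d + j) (k - j) := by
    rw [← poch_add, Nat.add_sub_cancel' hj']
  have hD : poch (d+j) (k-j) = (-1)^(k-j) * poch (1 - d - k) (k-j) := by
    rw [poch_reflect (d+j) (k-j)]
    congr 2
    push_cast [Nat.cast_sub hj']; ring
  have hA : poch (-(k:ℂ)) j = (-1)^j * (k.factorial : ℂ) / ((k-j).factorial : ℂ) :=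
    poch_neg_nat k j hj'
  have hE : (k.choose j : ℂ) = (k.factorial : ℂ) / ((j.factorial : ℂ) * ((k-j).factorial : ℂ)) :=
    Nat.cast_choose ℂ hj'
  have hsign : ((-1:ℂ))^j * (-1)^(k-j) = (-1)^k := by
    rw [← pow_add, Nat.add_sub_cancel' hj']
  have hpdj : poch d j ≠ 0 := poch_ne_zero (fun i _ => hd i)
  have hpdj2 : poch (d + j) (k-j) ≠ 0 := by
    refine poch_ne_zero (fun i _ => ?_)
    have : d + (j:ℂ) + i = d + ((j+i : ℕ) : ℂ) := by push_cast; ring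
    rw [this]; exact hd _
  have hfj : ((j.factorial : ℂ)) ≠ 0 := Nat.cast_ne_zero.mpr (Nat.factorial_ne_zero j)
  have hfkj : (((k-j).factorial : ℂ)) ≠ 0 := Nat.cast_ne_zero.mpr (Nat.factorial_ne_zero (k-j))
  rw [hCk, hA, hE]
  have hD' : poch (1 - d - k) (k-j) = (-1)^(k-j) * poch (d+j) (k-j) := by
    rw [hD]; ring_nf
    rw [mul_comm (k-j) 2, pow_mul]
    norm_num
  rw [hD']
  field_simp
  ring_nf
  rw [← hsign]
  have hsq : ((-1:ℂ))^(k-j) * (-1)^(k-j) = 1 := by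
    rw [← pow_add]; exact Even.neg_one_pow ⟨k-j, rfl⟩
  linear_combination (-(↑k.factorial * poch b j * (-1:ℂ)^j)) * hsq

theorem terminating_transform_85 (n : ℕ) (a b c d : ℂ)
    (hc : ∀ k : ℕ, c ≠ -(k : ℂ)) (hcn : ∀ k : ℕ, c - n ≠ -(k : ℂ))
    (hd : ∀ k : ℕ, d ≠ -(k : ℂ)) (hac : ∀ k : ℕ, 1 + a - c ≠ -(k : ℂ)) :
    ∑ k ∈ Finset.range (n + 1),
        poch (-(n : ℂ)) k * poch a k * poch b k /
          (poch (c - n) k * poch d k * (Nat.factorial k : ℂ)) =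
      (poch (1 + a - c) n / poch (1 - c) n) *
        ∑ k ∈ Finset.range (n + 1),
          poch (-(n : ℂ)) k * poch a k * poch (d - b) k /
            (poch (1 + a - c) k * poch d k * (Nat.factorial k : ℂ)) := by
  symm
  set e : ℂ := 1 + a - c with he
  clear_value e
  have hD : ∀ i : ℕ, d + i ≠ 0 := fun i h => hd i (eq_neg_of_add_eq_zero_left h)
  have hE : ∀ i : ℕ, e + i ≠ 0 := fun i h => hac i (eq_neg_of_add_eq_zero_left h)
  have hCN : ∀ i : ℕ, (c - n) + i ≠ 0 := fun i h => hcn i (eq_neg_of_add_eq_zero_left h)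
  have hC1 : ∀ i : ℕ, i < n → (1 - c) + i ≠ 0 := by
    intro i hi h
    refine hcn (n - 1 - i) ?_
    have hcast : ((n - 1 - i : ℕ) : ℂ) = (n : ℂ) - 1 - i := by
      have : (n - 1 - i : ℕ) = n - (1 + i) := by omega
      rw [this]
      push_cast [Nat.cast_sub (by omega : 1 + i ≤ n)]
      ring
    rw [hcast]
    linear_combination -h
  have hpe : ∀ m : ℕ, poch e m ≠ 0 := fun m => poch_ne_zero (fun i _ => hE i)
  have hpd : ∀ m : ℕ, poch d m ≠ 0 := fun m => poch_ne_zero (fun i _ => hD i)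
  have hpcn : ∀ m : ℕ, poch (c - n) m ≠ 0 := fun m => poch_ne_zero (fun i _ => hCN i)
  have hpej : ∀ j m : ℕ, poch (e + j) m ≠ 0 := by
    intro j m
    refine poch_ne_zero (fun i _ => ?_)
    have : e + (j:ℂ) + i = e + ((j+i : ℕ) : ℂ) := by push_cast; ring
    rw [this]; exact hE _
  have hpc1 : ∀ m : ℕ, m ≤ n → poch (1 - c) m ≠ 0 := fun m hm =>
    poch_ne_zero (fun i hi => hC1 i (by omega))
  have hfac : ∀ m : ℕ, ((m.factorial : ℂ)) ≠ 0 :=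
    fun m => Nat.cast_ne_zero.mpr (Nat.factorial_ne_zero m)
  set F : ℕ → ℕ → ℂ := fun k j =>
    poch (-(n:ℂ)) k * poch a k / (poch e k * (k.factorial : ℂ)) *
      (poch (-(k:ℂ)) j * poch b j / (poch d j * (j.factorial : ℂ))) with hF
  -- Step 1: expand the RHS sum into a double sum
  have step1 : ∑ k ∈ Finset.range (n + 1),
      poch (-(n : ℂ)) k * poch a k * poch (d - b) k /
        (poch e k * poch d k * (Nat.factorial k : ℂ)) =
      ∑ k ∈ Finset.range (n + 1), ∑ j ∈ Finset.range (n + 1), F k j := by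
    refine Finset.sum_congr rfl fun k hk => ?_
    have hk' : k ≤ n := Nat.lt_succ_iff.mp (Finset.mem_range.mp hk)
    have h1 : poch (-(n : ℂ)) k * poch a k * poch (d - b) k /
        (poch e k * poch d k * (Nat.factorial k : ℂ)) =
        poch (-(n:ℂ)) k * poch a k / (poch e k * (k.factorial : ℂ)) *
          (poch (d - b) k / poch d k) := by
      field_simp
    rw [h1, ← chuv b d k hD, Finset.mul_sum]
    rw [Finset.sum_subset (Finset.range_subset_range.mpr (by omega : k + 1 ≤ n + 1))]
    intro j hj hj'
    have : k < j := by
      simp only [Finset.mem_range] at hj hj'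
      omega
    rw [poch_neg_self_gt this]
    ring
  rw [step1, Finset.sum_comm]
  -- Step 2: evaluate inner sums over k for fixed j
  have step2 : ∀ j : ℕ, j ≤ n → ∑ k ∈ Finset.range (n + 1), F k j =
      (-1:ℂ)^j * (poch (-(n:ℂ)) j * poch a j * poch b j /
        (poch e j * poch d j * (j.factorial : ℂ))) *
        (poch (1 - c) (n - j) / poch (e + j) (n - j)) := by
    intro j hj
    have hsub : Finset.Ico j (n+1) ⊆ Finset.range (n+1) := by
      intro x hx
      simp only [Finset.mem_Ico] at hx
      exact Finset.mem_range.mpr hx.2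
    have h0 : ∀ k ∈ Finset.range (n+1), k ∉ Finset.Ico j (n+1) → F k j = 0 := by
      intro k hk hk'
      have hlt : k < j := by
        simp only [Finset.mem_range] at hk
        simp only [Finset.mem_Ico, not_and, not_lt] at hk'
        omega
      show poch (-(n:ℂ)) k * poch a k / (poch e k * (k.factorial : ℂ)) *
        (poch (-(k:ℂ)) j * poch b j / (poch d j * (j.factorial : ℂ))) = 0
      rw [poch_neg_self_gt hlt]
      ring
    rw [← Finset.sum_subset hsub h0, Finset.sum_Ico_eq_sum_range,
      (by omega : n + 1 - j = (n - j) + 1)]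
    have hterm : ∀ m ∈ Finset.range ((n-j)+1), F (j+m) j =
        ((-1:ℂ)^j * (poch (-(n:ℂ)) j * poch a j * poch b j /
          (poch e j * poch d j * (j.factorial : ℂ)))) *
          (poch (-((n-j : ℕ):ℂ)) m * poch (a + j) m /
            (poch (e + j) m * (m.factorial : ℂ))) := by
      intro m hm
      have hm' : m ≤ n - j := Nat.lt_succ_iff.mp (Finset.mem_range.mp hm)
      have hA := poch_neg_nat (j+m) j (Nat.le_add_right j m)
      rw [Nat.add_sub_cancel_left] at hA
      have hcast : (-((n-j : ℕ):ℂ)) = -(n:ℂ) + j := by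
        push_cast [Nat.cast_sub hj]; ring
      show poch (-(n:ℂ)) (j+m) * poch a (j+m) / (poch e (j+m) * ((j+m).factorial : ℂ)) *
        (poch (-((j+m : ℕ):ℂ)) j * poch b j / (poch d j * (j.factorial : ℂ))) = _
      rw [poch_add (-(n:ℂ)) j m, poch_add a j m, poch_add e j m, hcast, hA]
      have hfjm : (((j+m).factorial : ℂ)) ≠ 0 := hfac (j+m)
      field_simp
    rw [Finset.sum_congr rfl hterm, ← Finset.mul_sum]
    have hch := chuv (a + j) (e + j) (n - j) (by
      intro i
      have : e + (j:ℂ) + i = e + ((j+i : ℕ) : ℂ) := by push_cast; ring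
      rw [this]; exact hE _)
    rw [hch, (by rw [he]; ring : e + (j:ℂ) - (a + j) = 1 - c)]
  rw [Finset.sum_congr rfl
    (fun j hj => step2 j (Nat.lt_succ_iff.mp (Finset.mem_range.mp hj))), Finset.mul_sum]
  refine Finset.sum_congr rfl fun j hj => ?_
  have hj' : j ≤ n := Nat.lt_succ_iff.mp (Finset.mem_range.mp hj)
  have h1 : poch e n = poch e j * poch (e + j) (n - j) := by
    rw [← poch_add, Nat.add_sub_cancel' hj']
  have h2 : poch (1-c) n = poch (1-c) (n-j) * poch ((1-c) + ((n-j:ℕ):ℂ)) j := by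
    rw [← poch_add, Nat.sub_add_cancel hj']
  have h3 : poch ((1-c) + ((n-j:ℕ):ℂ)) j = (-1)^j * poch (c - n) j := by
    rw [poch_reflect]
    congr 2
    push_cast [Nat.cast_sub hj']
    ring
  have hne1 : poch e j ≠ 0 := hpe j
  have hne2 : poch (e + j) (n - j) ≠ 0 := hpej j (n - j)
  have hne3 : poch (1-c) (n-j) ≠ 0 := hpc1 (n-j) (Nat.sub_le n j)
  have hne4 : poch (c - n) j ≠ 0 := hpcn j
  have hne5 : poch d j ≠ 0 := hpd j
  have hne6 : ((j.factorial : ℂ)) ≠ 0 := hfac j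
  rw [h1, h2, h3]
  have hsq : ((-1:ℂ))^j * (-1)^j = 1 := by
    rw [← pow_add]; exact Even.neg_one_pow ⟨j, rfl⟩
  field_simp
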